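/- Let L : ℝ^p → ℝ be convex and differentiable with K-Lipschitz gradient, where K > 0, let w* ∈ ℝ^p satisfy ∇L(w*) = 0, let 0 < η ≤ 2/K, and let D_w ≥ 0. Let T be a positive integer, let Δ₁, …, Δ_T ∈ ℝ^p, and let w₁, …, w_{T+1} ∈ ℝ^p satisfy w_{t+1} = w_t − ηΔ_t for t = 1, …, T, with ‖w₁ − w*‖ ≤ D_w. Setting A_t = Δ_t − ∇L(w_t), one has (2η − Kη²) · ∑_{t=1}^T (L(w_t) − L(w*)) ≤ D_w² − 2η ∑_{t=1}^T ⟨w_t − η∇L(w_t) − w*, A_t⟩ + η² ∑_{t=1}^T ‖A_t‖². -/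

import Mathlib

set_option maxHeartbeats 1000000

open RealInnerProductSpace

section helpers

variable {E : Type*} [NormedAddCommGroup E] [InnerProductSpace ℝ E] [CompleteSpace E]

lemma hasDerivAt_line (L : E → ℝ) (hdiff : Differentiable ℝ L) (x v : E) (t : ℝ) :
    HasDerivAt (fun s : ℝ => L (s • v + x)) ⟪gradient L (t • v + x), v⟫ t := by
  have hγ : HasDerivAt (fun s : ℝ => s • v + x) v t := by
    simpa using ((hasDerivAt_id t).smul_const v).add_const x
  have hL := (hdiff (t • v + x)).hasGradientAt.hasFDerivAt
  have h := hL.comp_hasDerivAt t hγ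
  simpa [InnerProductSpace.toDual_apply_apply, Function.comp_def] using h

lemma grad_ineq (L : E → ℝ) (hconv : ConvexOn ℝ Set.univ L)
    (hdiff : Differentiable ℝ L) (x y : E) :
    L x + ⟪gradient L x, y - x⟫ ≤ L y := by
  set φ : ℝ → ℝ := fun s => L (s • (y - x) + x) with hφ
  have hφc : ConvexOn ℝ Set.univ φ := by
    have h := hconv.comp_affineMap (AffineMap.lineMap x y : ℝ →ᵃ[ℝ] E)
    have he : φ = L ∘ (AffineMap.lineMap x y : ℝ →ᵃ[ℝ] E) := by
      funext s
      simp only [hφ, Function.comp_apply, AffineMap.lineMap_apply, vsub_eq_sub,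
        vadd_eq_add]
    rw [he]
    simpa using h
  have hd := hasDerivAt_line L hdiff x (y - x) 0
  have hslope := hφc.le_slope_of_hasDerivAt (Set.mem_univ (0:ℝ)) (Set.mem_univ (1:ℝ))
    one_pos (by simpa [hφ] using hd)
  have h0 : φ 0 = L x := by simp [hφ]
  have h1 : φ 1 = L y := by simp [hφ]
  rw [slope_def_field] at hslope
  simp [h0, h1] at hslope
  simp
  linarith

lemma descent_lemma (L : E → ℝ) (K : ℝ) (hK : 0 < K)
    (hdiff : Differentiable ℝ L)
    (hlip : ∀ u v : E, ‖gradient L u - gradient L v‖ ≤ K * ‖u - v‖)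
    (x y : E) :
    L y ≤ L x + ⟪gradient L x, y - x⟫ + K / 2 * ‖y - x‖ ^ 2 := by
  set v := y - x with hv
  set c : ℝ := ⟪gradient L x, v⟫ with hc
  set q : ℝ := K / 2 * ‖v‖ ^ 2 with hq
  set f : ℝ → ℝ := fun t => L (t • v + x) - t * c - q * t ^ 2 with hf
  have hder : ∀ t : ℝ, HasDerivAt f (⟪gradient L (t • v + x), v⟫ - c - q * (2 * t)) t := by
    intro t
    have h1 := hasDerivAt_line L hdiff x v t
    have h2 : HasDerivAt (fun s : ℝ => s * c) c t := by
      simpa using (hasDerivAt_id t).mul_const c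
    have h3 : HasDerivAt (fun s : ℝ => q * s ^ 2) (q * (2 * t)) t := by
      simpa using (hasDerivAt_pow 2 t).const_mul q
    exact (h1.sub h2).sub h3
  have hanti : AntitoneOn f (Set.Icc (0:ℝ) 1) := by
    apply antitoneOn_of_deriv_nonpos (convex_Icc 0 1)
    · exact (Differentiable.continuous (fun t => (hder t).differentiableAt)).continuousOn
    · intro t _
      exact (hder t).differentiableAt.differentiableWithinAt
    · intro t ht
      rw [interior_Icc] at ht
      rw [(hder t).deriv]
      have hb : ⟪gradient L (t • v + x) - gradient L x, v⟫ ≤ K * t * ‖v‖ ^ 2 := by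
        calc ⟪gradient L (t • v + x) - gradient L x, v⟫
            ≤ ‖gradient L (t • v + x) - gradient L x‖ * ‖v‖ := real_inner_le_norm _ _
          _ ≤ (K * ‖t • v + x - x‖) * ‖v‖ := by
              exact mul_le_mul_of_nonneg_right (hlip _ _) (norm_nonneg _)
          _ = K * t * ‖v‖ ^ 2 := by
              rw [add_sub_cancel_right, norm_smul, Real.norm_eq_abs,
                abs_of_pos ht.1]
              ring
      rw [inner_sub_left] at hb
      have : q * (2 * t) = K * t * ‖v‖ ^ 2 := by rw [hq]; ring
      linarith
  have hfin := hanti (Set.left_mem_Icc.mpr zero_le_one) (Set.right_mem_Icc.mpr zero_le_one)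
    zero_le_one
  have h0 : f 0 = L x := by simp [hf]
  have h1 : f 1 = L y - c - q := by simp [hf, hv]
  rw [h0, h1] at hfin
  linarith

lemma interp_ineq (L : E → ℝ) (K : ℝ) (hK : 0 < K)
    (hconv : ConvexOn ℝ Set.univ L) (hdiff : Differentiable ℝ L)
    (hlip : ∀ u v : E, ‖gradient L u - gradient L v‖ ≤ K * ‖u - v‖)
    (x y : E) :
    L x + ⟪gradient L x, y - x⟫ + 1 / (2 * K) * ‖gradient L y - gradient L x‖ ^ 2 ≤ L y := by
  set u := gradient L y - gradient L x with hu
  set y' := y - (1 / K) • u with hy'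
  have h1 := grad_ineq L hconv hdiff x y'
  have h2 := descent_lemma L K hK hdiff hlip y y'
  have e1 : y' - y = -((1 / K) • u) := by rw [hy']; abel
  have e2 : ⟪gradient L y, y' - y⟫ = -(1 / K) * ⟪gradient L y, u⟫ := by
    rw [e1, inner_neg_right, real_inner_smul_right]; ring
  have e3 : ‖y' - y‖ ^ 2 = (1 / K) ^ 2 * ‖u‖ ^ 2 := by
    rw [e1, norm_neg, norm_smul, mul_pow, Real.norm_eq_abs, sq_abs]
  have e4 : ⟪gradient L x, y' - x⟫
      = ⟪gradient L x, y - x⟫ - (1 / K) * ⟪gradient L x, u⟫ := by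
    have : y' - x = (y - x) - (1 / K) • u := by rw [hy']; abel
    rw [this, inner_sub_right, real_inner_smul_right]
  have e5 : ⟪gradient L y, u⟫ - ⟪gradient L x, u⟫ = ‖u‖ ^ 2 := by
    rw [← inner_sub_left, ← hu, real_inner_self_eq_norm_sq]
  rw [e2, e3] at h2
  rw [e4] at h1
  have hK' : K ≠ 0 := ne_of_gt hK
  have e6 : K / 2 * ((1 / K) ^ 2 * ‖u‖ ^ 2) = 1 / (2 * K) * ‖u‖ ^ 2 := by
    field_simp
  rw [e6] at h2
  have e5' : 1 / K * ⟪gradient L y, u⟫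
      = 1 / K * ⟪gradient L x, u⟫ + 1 / K * ‖u‖ ^ 2 := by
    have h : ⟪gradient L y, u⟫ = ⟪gradient L x, u⟫ + ‖u‖ ^ 2 := by linarith [e5]
    rw [h]; ring
  have e7 : 1 / K * ‖u‖ ^ 2 = 2 * (1 / (2 * K) * ‖u‖ ^ 2) := by
    field_simp
  linarith [h1, h2, e5', e7]

end helpers

theorem stmt_5 (p : ℕ) (K : ℝ) (hK : 0 < K)
    (L : EuclideanSpace ℝ (Fin p) → ℝ)
    (hconv : ConvexOn ℝ Set.univ L)
    (hdiff : Differentiable ℝ L)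
    (hlip : ∀ u v : EuclideanSpace ℝ (Fin p),
      ‖gradient L u - gradient L v‖ ≤ K * ‖u - v‖)
    (wstar : EuclideanSpace ℝ (Fin p)) (hstar : gradient L wstar = 0)
    (η : ℝ) (hη0 : 0 < η) (hη : η ≤ 2 / K)
    (Dw : ℝ) (hDw : 0 ≤ Dw)
    (T : ℕ) (hT : 0 < T)
    (Δ : ℕ → EuclideanSpace ℝ (Fin p)) (w : ℕ → EuclideanSpace ℝ (Fin p))
    (hupdate : ∀ t ∈ Finset.range T, w (t + 1) = w t - η • Δ t)
    (hinit : ‖w 0 - wstar‖ ≤ Dw)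
    (A : ℕ → EuclideanSpace ℝ (Fin p))
    (hA : ∀ t, A t = Δ t - gradient L (w t)) :
    (2 * η - K * η ^ 2) * ∑ t ∈ Finset.range T, (L (w t) - L wstar) ≤
      Dw ^ 2 - 2 * η * ∑ t ∈ Finset.range T, ⟪w t - η • gradient L (w t) - wstar, A t⟫
        + η ^ 2 * ∑ t ∈ Finset.range T, ‖A t‖ ^ 2 := by
  have hKη : η * K ≤ 2 := (le_div_iff₀ hK).mp hη
  have hstep : ∀ t ∈ Finset.range T,
      (2 * η - K * η ^ 2) * (L (w t) - L wstar)
        + 2 * η * ⟪w t - η • gradient L (w t) - wstar, A t⟫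
        - η ^ 2 * ‖A t‖ ^ 2
      ≤ ‖w t - wstar‖ ^ 2 - ‖w (t + 1) - wstar‖ ^ 2 := by
    intro t ht
    set x := w t - wstar with hx
    set gt := gradient L (w t) with hgt
    set a := A t with ha
    have hΔ : Δ t = gt + a := by rw [ha, hA t]; abel
    have hw1 : w (t + 1) - wstar = x - η • (gt + a) := by
      rw [hupdate t ht, hΔ, hx, sub_right_comm]
    have hexp : ‖x - η • (gt + a)‖ ^ 2
        = ‖x‖ ^ 2 - 2 * η * (⟪x, gt⟫ + ⟪x, a⟫)
          + η ^ 2 * (‖gt‖ ^ 2 + 2 * ⟪gt, a⟫ + ‖a‖ ^ 2) := by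
      rw [norm_sub_sq_real, real_inner_smul_right, inner_add_right, norm_smul,
        mul_pow, Real.norm_eq_abs, sq_abs, norm_add_sq_real]
      ring
    have hcross : ⟪w t - η • gt - wstar, a⟫ = ⟪x, a⟫ - η * ⟪gt, a⟫ := by
      have h : w t - η • gt - wstar = x - η • gt := by rw [hx]; abel
      rw [h, inner_sub_left, real_inner_smul_left]
    have hI1 := interp_ineq L K hK hconv hdiff hlip wstar (w t)
    have hI2 := interp_ineq L K hK hconv hdiff hlip (w t) wstar
    rw [hstar] at hI1 hI2
    rw [inner_zero_left, sub_zero, add_zero] at hI1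
    rw [zero_sub, norm_neg] at hI2
    -- hI1 : L wstar + 1/(2K) ‖gt‖² ≤ L (w t)
    -- hI2 : L (w t) + ⟪gt, wstar - w t⟫ + 1/(2K) ‖gt‖² ≤ L wstar
    have hSg : ⟪gt, wstar - w t⟫ = -⟪x, gt⟫ := by
      have : wstar - w t = -x := by rw [hx]; abel
      rw [this, inner_neg_right, real_inner_comm]
    rw [hSg] at hI2
    have hKpos : (0:ℝ) < 2 * K := by linarith
    have hG1 : ‖gt‖ ^ 2 ≤ 2 * K * (L (w t) - L wstar) := by
      have h := hI1
      have h' : 1 / (2 * K) * ‖gt‖ ^ 2 ≤ L (w t) - L wstar := by linarith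
      rw [show 1 / (2 * K) * ‖gt‖ ^ 2 = ‖gt‖ ^ 2 / (2 * K) by ring] at h'
      rw [div_le_iff₀ hKpos] at h'
      linarith [h']
    have hG2 : 2 * K * (L (w t) - L wstar) + ‖gt‖ ^ 2 ≤ 2 * K * ⟪x, gt⟫ := by
      have h' : (L (w t) - L wstar) + 1 / (2 * K) * ‖gt‖ ^ 2 ≤ ⟪x, gt⟫ := by linarith
      have h2 := mul_le_mul_of_nonneg_left h' hKpos.le
      have : 2 * K * (1 / (2 * K) * ‖gt‖ ^ 2) = ‖gt‖ ^ 2 := by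
        field_simp
      nlinarith [h2]
    rw [hw1, hexp, hcross]
    have hGnn : (0:ℝ) ≤ ‖gt‖ ^ 2 := by positivity
    nlinarith [mul_le_mul_of_nonneg_left hG2 (mul_pos hη0 hη0).le,
      mul_le_mul_of_nonneg_left hG1 (mul_pos hη0 hη0).le,
      mul_nonneg (mul_nonneg hη0.le hGnn) (sub_nonneg.mpr hKη),
      mul_le_mul_of_nonneg_left hG2 hη0.le]
  -- sum up
  have hsum := Finset.sum_le_sum hstep
  rw [Finset.sum_range_sub' (fun t => ‖w t - wstar‖ ^ 2) T] at hsum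
  have hP0 : ‖w 0 - wstar‖ ^ 2 ≤ Dw ^ 2 := by
    have := pow_le_pow_left₀ (norm_nonneg _) hinit 2
    exact this
  have hPT : (0:ℝ) ≤ ‖w T - wstar‖ ^ 2 := by positivity
  have hsplit : ∑ t ∈ Finset.range T,
      ((2 * η - K * η ^ 2) * (L (w t) - L wstar)
        + 2 * η * ⟪w t - η • gradient L (w t) - wstar, A t⟫
        - η ^ 2 * ‖A t‖ ^ 2)
      = (2 * η - K * η ^ 2) * ∑ t ∈ Finset.range T, (L (w t) - L wstar)
        + 2 * η * ∑ t ∈ Finset.range T, ⟪w t - η • gradient L (w t) - wstar, A t⟫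
        - η ^ 2 * ∑ t ∈ Finset.range T, ‖A t‖ ^ 2 := by
    rw [Finset.sum_sub_distrib, Finset.sum_add_distrib, Finset.mul_sum,
      Finset.mul_sum, Finset.mul_sum]
  rw [hsplit] at hsum
  linarith
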